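/- Suppose Y and C are independent real-valued random variables. Then for every y ∈ ℝ with ℙ(Q ≥ y) > 0, the cumulative hazard of Y computed from the observable censored-data quantities coincides with the true cumulative hazard: ∫_{(-∞,y]} (ℙ(Q ≥ s))⁻¹ dν₁(s) = ∫_{(-∞,y]} (ℙ(Y ≥ s))⁻¹ dμ_Y(s). (This is the identity Λ = Λ^cens of Proposition 1 in the no-covariate case, applied within one treatment arm.) -/

import Mathlib

open MeasureTheory ProbabilityTheory Set

/-- If the latent outcome `Y` and the censoring variable `C` are independent,
then for every `y` with `P(Q ≥ y) > 0` (where `Q = min(Y, C)` is the observed outcome), the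
cumulative hazard of `Y` computed from observable censored-data quantities coincides with the
true cumulative hazard:
`∫_{(-∞,y]} (P(Q ≥ s))⁻¹ dν₁(s) = ∫_{(-∞,y]} (P(Y ≥ s))⁻¹ dμ_Y(s)`,
where `ν₁(A) = P(Q ∈ A, Y ≤ C)` is the uncensored sub-distribution measure and `μ_Y` is the
law of `Y`. -/
theorem cumulative_hazard_identified_from_censored_data
    {Ω : Type*} [MeasurableSpace Ω] (P : Measure Ω) [IsProbabilityMeasure P]
    (Y C : Ω → ℝ) (hY : Measurable Y) (hC : Measurable C)
    (hindep : IndepFun Y C P)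
    (y : ℝ) (hy : 0 < P {ω | y ≤ min (Y ω) (C ω)}) :
    ∫⁻ s in Iic y, (P {ω | s ≤ min (Y ω) (C ω)})⁻¹
        ∂(Measure.map (fun ω => min (Y ω) (C ω)) (P.restrict {ω | Y ω ≤ C ω}))
      = ∫⁻ s in Iic y, (P {ω | s ≤ Y ω})⁻¹ ∂(Measure.map Y P) := by
  set Q : Ω → ℝ := fun ω => min (Y ω) (C ω) with hQdef
  have hQm : Measurable Q := hY.min hC
  set μ := Measure.map Y P with hμ
  set ν := Measure.map C P with hν
  have hGext : ∀ t : ℝ, P {ω | t ≤ C ω} = ν (Ici t) := fun t => by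
    rw [hν, Measure.map_apply hC measurableSet_Ici]; rfl
  have hG : Measurable (fun t : ℝ => P {ω | t ≤ C ω}) := by
    simp only [hGext]
    have hanti : Antitone (fun t : ℝ => ν (Ici t)) :=
      fun a b hab => measure_mono (Ici_subset_Ici.mpr hab)
    exact hanti.measurable
  have hFext : ∀ t : ℝ, P {ω | t ≤ Y ω} = μ (Ici t) := fun t => by
    rw [hμ, Measure.map_apply hY measurableSet_Ici]; rfl
  -- key measure identity
  have key : Measure.map Q (P.restrict {ω | Y ω ≤ C ω})
      = μ.withDensity (fun t => P {ω | t ≤ C ω}) := by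
    ext A hA
    rw [Measure.map_apply hQm hA,
      Measure.restrict_apply (hQm hA), withDensity_apply _ hA]
    have hset : Q ⁻¹' A ∩ {ω | Y ω ≤ C ω}
        = (fun ω => (Y ω, C ω)) ⁻¹' {p : ℝ × ℝ | p.1 ∈ A ∧ p.1 ≤ p.2} := by
      ext ω
      simp only [mem_inter_iff, mem_preimage, mem_setOf_eq]
      constructor
      · rintro ⟨h1, h2⟩
        refine ⟨?_, h2⟩
        simpa [hQdef, min_eq_left h2] using h1
      · rintro ⟨h1, h2⟩
        refine ⟨?_, h2⟩
        simpa [hQdef, min_eq_left h2] using h1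
    have hSm : MeasurableSet {p : ℝ × ℝ | p.1 ∈ A ∧ p.1 ≤ p.2} :=
      (measurable_fst hA).inter (measurableSet_le measurable_fst measurable_snd)
    have hprod := (indepFun_iff_map_prod_eq_prod_map_map hY.aemeasurable hC.aemeasurable).mp hindep
    rw [hset, ← Measure.map_apply (hY.prodMk hC) hSm, hprod, ← hμ, ← hν,
      Measure.prod_apply hSm]
    have : ∀ t : ℝ, ν (Prod.mk t ⁻¹' {p : ℝ × ℝ | p.1 ∈ A ∧ p.1 ≤ p.2})
        = A.indicator (fun t => P {ω | t ≤ C ω}) t := by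
      intro t
      by_cases ht : t ∈ A
      · have : Prod.mk t ⁻¹' {p : ℝ × ℝ | p.1 ∈ A ∧ p.1 ≤ p.2} = Ici t := by
          ext b; simp [ht, mem_Ici]
        rw [this, indicator_of_mem ht, hGext]
      · have : Prod.mk t ⁻¹' {p : ℝ × ℝ | p.1 ∈ A ∧ p.1 ≤ p.2} = ∅ := by
          ext b; simp [ht]
        rw [this, indicator_of_notMem ht, measure_empty]
    simp_rw [this]
    rw [lintegral_indicator hA]
  -- the "observable" quantity measurability
  have hfm : Measurable (fun s : ℝ => (P {ω | s ≤ Q ω})⁻¹) := by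
    have hQext : ∀ t : ℝ, P {ω | t ≤ Q ω} = (Measure.map Q P) (Ici t) := fun t => by
      rw [Measure.map_apply hQm measurableSet_Ici]; rfl
    simp only [hQext]
    have hanti : Antitone (fun t : ℝ => (Measure.map Q P) (Ici t)) :=
      fun a b hab => measure_mono (Ici_subset_Ici.mpr hab)
    exact hanti.measurable.inv
  calc ∫⁻ s in Iic y, (P {ω | s ≤ Q ω})⁻¹ ∂(Measure.map Q (P.restrict {ω | Y ω ≤ C ω}))
      = ∫⁻ s in Iic y, P {ω | s ≤ C ω} * (P {ω | s ≤ Q ω})⁻¹ ∂μ := by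
        rw [key, restrict_withDensity measurableSet_Iic,
          lintegral_withDensity_eq_lintegral_mul _ hG hfm]
        rfl
    _ = ∫⁻ s in Iic y, (P {ω | s ≤ Y ω})⁻¹ ∂μ := by
        refine setLIntegral_congr_fun measurableSet_Iic (fun s hs => ?_)
        have hsub : {ω | y ≤ Q ω} ⊆ {ω | s ≤ Q ω} := fun ω hω => le_trans (mem_Iic.mp hs) hω
        have hQpos : P {ω | s ≤ Q ω} ≠ 0 := (lt_of_lt_of_le hy (measure_mono hsub)).ne'
        have hmul : P {ω | s ≤ Q ω} = P {ω | s ≤ Y ω} * P {ω | s ≤ C ω} := by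
          have : {ω | s ≤ Q ω} = Y ⁻¹' Ici s ∩ C ⁻¹' Ici s := by
            ext ω; simp [hQdef, le_min_iff, mem_Ici]
          rw [this, hindep.measure_inter_preimage_eq_mul _ _ measurableSet_Ici measurableSet_Ici]
          rfl
        have hG0 : P {ω | s ≤ C ω} ≠ 0 := by
          intro h; exact hQpos (by rw [hmul, h, mul_zero])
        have hGtop : P {ω | s ≤ C ω} ≠ ⊤ := measure_ne_top _ _
        rw [hmul, ENNReal.mul_inv (Or.inr hGtop) (Or.inl (measure_ne_top _ _)),
          mul_comm (P {ω | s ≤ Y ω})⁻¹ _, ← mul_assoc,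
          ENNReal.mul_inv_cancel hG0 hGtop, one_mul]
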